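/- For every SOIRE r over a finite alphabet Σ there exists a SOIRE r' over Σ such that |r'| ≤ 4·|Σ| − 2 and L(r') = L(r), i.e., r' matches exactly the same strings as r. -/

import Mathlib

/-- Regular expressions with interleaving, RE(&). -/
inductive RE (α : Type) : Type where
  | sym : α → RE α
  | opt : RE α → RE α
  | star : RE α → RE α
  | plus : RE α → RE α
  | cat : RE α → RE α → RE α
  | inter : RE α → RE α → RE α
  | alt : RE α → RE α → RE α

/-- `Shuffle s₁ s₂ s` : `s` is a shuffle (interleaving) of `s₁` and `s₂`. -/
inductive Shuffle {α : Type} : List α → List α → List α → Prop where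
  | nil : Shuffle [] [] []
  | left {a : α} {s₁ s₂ s : List α} : Shuffle s₁ s₂ s → Shuffle (a :: s₁) s₂ (a :: s)
  | right {a : α} {s₁ s₂ s : List α} : Shuffle s₁ s₂ s → Shuffle s₁ (a :: s₂) (a :: s)

/-- The matching relation `r ⊨ s`. -/
inductive Matches {α : Type} : RE α → List α → Prop where
  | sym (a : α) : Matches (RE.sym a) [a]
  | optEps (r : RE α) : Matches (RE.opt r) []
  | opt {r : RE α} {s : List α} : Matches r s → Matches (RE.opt r) s
  | starEps (r : RE α) : Matches (RE.star r) []
  | starStep {r : RE α} {s₁ s₂ : List α} : s₂ ≠ [] → Matches (RE.star r) s₁ →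
      Matches r s₂ → Matches (RE.star r) (s₁ ++ s₂)
  | plus {r : RE α} {s₁ s₂ : List α} : Matches (RE.star r) s₁ → Matches r s₂ →
      Matches (RE.plus r) (s₁ ++ s₂)
  | cat {r₁ r₂ : RE α} {s₁ s₂ : List α} : Matches r₁ s₁ → Matches r₂ s₂ →
      Matches (RE.cat r₁ r₂) (s₁ ++ s₂)
  | inter {r₁ r₂ : RE α} {s₁ s₂ s : List α} : Shuffle s₁ s₂ s → Matches r₁ s₁ →
      Matches r₂ s₂ → Matches (RE.inter r₁ r₂) s
  | altLeft {r₁ r₂ : RE α} {s : List α} : Matches r₁ s → Matches (RE.alt r₁ r₂) s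
  | altRight {r₁ r₂ : RE α} {s : List α} : Matches r₂ s → Matches (RE.alt r₁ r₂) s

/-- The list of symbol occurrences of a RE(&). -/
def RE.symList {α : Type} : RE α → List α
  | .sym a => [a]
  | .opt r => r.symList
  | .star r => r.symList
  | .plus r => r.symList
  | .cat r₁ r₂ => r₁.symList ++ r₂.symList
  | .inter r₁ r₂ => r₁.symList ++ r₂.symList
  | .alt r₁ r₂ => r₁.symList ++ r₂.symList

/-- A SOIRE is a RE(&) in which every symbol occurs at most once. -/
def SOIRE {α : Type} (r : RE α) : Prop := r.symList.Nodup

/-- `α(r)` : the set of symbols occurring in `r`. -/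
def RE.alpha {α : Type} [DecidableEq α] : RE α → Finset α
  | .sym a => {a}
  | .opt r => r.alpha
  | .star r => r.alpha
  | .plus r => r.alpha
  | .cat r₁ r₂ => r₁.alpha ∪ r₂.alpha
  | .inter r₁ r₂ => r₁.alpha ∪ r₂.alpha
  | .alt r₁ r₂ => r₁.alpha ∪ r₂.alpha

/-- `filter(s, V)` : the subsequence of `s` of entries lying in `V`. -/
def filt {α : Type} [DecidableEq α] (s : List α) (V : Finset α) : List α :=
  s.filter (fun a => decide (a ∈ V))

/-- Tokens of the prefix notation: symbols and the six operators. -/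
inductive Tok (α : Type) : Type where
  | sym : α → Tok α
  | opt : Tok α
  | star : Tok α
  | plus : Tok α
  | cat : Tok α
  | inter : Tok α
  | alt : Tok α

/-- `PreForm(r)` : the prefix notation of `r` (preorder traversal of its syntax tree). -/
def RE.preForm {α : Type} : RE α → List (Tok α)
  | .sym a => [Tok.sym a]
  | .opt r => Tok.opt :: r.preForm
  | .star r => Tok.star :: r.preForm
  | .plus r => Tok.plus :: r.preForm
  | .cat r₁ r₂ => Tok.cat :: (r₁.preForm ++ r₂.preForm)
  | .inter r₁ r₂ => Tok.inter :: (r₁.preForm ++ r₂.preForm)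
  | .alt r₁ r₂ => Tok.alt :: (r₁.preForm ++ r₂.preForm)

/-- The size `|r|` of a RE(&): the length of its prefix notation. -/
def RE.size {α : Type} (r : RE α) : ℕ := r.preForm.length

/-- Whether a token is a symbol of the alphabet. -/
def Tok.isSym {α : Type} : Tok α → Bool
  | .sym _ => true
  | _ => false

/-- Whether a token is a binary operator (`·`, `&` or `|`). -/
def Tok.isBin {α : Type} : Tok α → Bool
  | .cat => true
  | .inter => true
  | .alt => true
  | _ => false

/-- `𝟙[o ∈ Σ] − 𝟙[o ∈ {·, &, |}]` for a token `o`. -/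
def Tok.val {α : Type} (o : Tok α) : ℤ :=
  (if o.isSym then 1 else 0) - (if o.isBin then 1 else 0)

section Aux

variable {α : Type}

@[simp] theorem size_sym' (a : α) : (RE.sym a).size = 1 := rfl
@[simp] theorem size_opt' (r : RE α) : (RE.opt r).size = r.size + 1 := by
  simp [RE.size, RE.preForm]
@[simp] theorem size_star' (r : RE α) : (RE.star r).size = r.size + 1 := by
  simp [RE.size, RE.preForm]
@[simp] theorem size_plus' (r : RE α) : (RE.plus r).size = r.size + 1 := by
  simp [RE.size, RE.preForm]
@[simp] theorem size_cat' (r₁ r₂ : RE α) : (RE.cat r₁ r₂).size = r₁.size + r₂.size + 1 := by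
  simp [RE.size, RE.preForm]
@[simp] theorem size_inter' (r₁ r₂ : RE α) : (RE.inter r₁ r₂).size = r₁.size + r₂.size + 1 := by
  simp [RE.size, RE.preForm]
@[simp] theorem size_alt' (r₁ r₂ : RE α) : (RE.alt r₁ r₂).size = r₁.size + r₂.size + 1 := by
  simp [RE.size, RE.preForm]

theorem reStarInv {q : RE α} {s : List α} (h : Matches q.star s) :
    s = [] ∨ ∃ s₁ s₂, s = s₁ ++ s₂ ∧ s₂ ≠ [] ∧ Matches q.star s₁ ∧ Matches q s₂ := by
  cases h with
  | starEps => exact Or.inl rfl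
  | starStep hne h1 h2 => exact Or.inr ⟨_, _, rfl, hne, h1, h2⟩

theorem reStarInd (q : RE α) (P : List α → Prop) (h0 : P [])
    (hstep : ∀ s₁ s₂, s₂ ≠ [] → Matches q.star s₁ → P s₁ → Matches q s₂ → P (s₁ ++ s₂)) :
    ∀ s, Matches q.star s → P s := by
  have key : ∀ n (s : List α), s.length ≤ n → Matches q.star s → P s := by
    intro n
    induction n with
    | zero =>
      intro s hl hm
      have : s = [] := List.length_eq_zero_iff.mp (Nat.le_zero.mp hl)
      subst this; exact h0
    | succ n ih =>
      intro s hl hm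
      rcases reStarInv hm with rfl | ⟨s₁, s₂, rfl, hne, h1, h2⟩
      · exact h0
      · have h2len : 1 ≤ s₂.length := List.length_pos_iff.mpr hne
        have hlen : s₁.length ≤ n := by
          simp only [List.length_append] at hl; omega
        exact hstep s₁ s₂ hne h1 (ih s₁ hlen h1) h2
  exact fun s => key s.length s le_rfl

theorem reToStar {q : RE α} {s : List α} (h : Matches q s) : Matches q.star s := by
  rcases eq_or_ne s [] with rfl | hne
  · exact Matches.starEps q
  · simpa using Matches.starStep hne (Matches.starEps q) h

theorem reStarAppend {q : RE α} {s₁ s₂ : List α} (h1 : Matches q.star s₁)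
    (h2 : Matches q.star s₂) : Matches q.star (s₁ ++ s₂) := by
  refine reStarInd q (fun t => Matches q.star (s₁ ++ t)) (by simpa using h1) ?_ s₂ h2
  intro t₁ t₂ hne _ ih h
  simpa [List.append_assoc] using Matches.starStep hne ih h

theorem reStarFlat {q q' : RE α} (h : ∀ t, Matches q t → Matches q'.star t) :
    ∀ s, Matches q.star s → Matches q'.star s :=
  reStarInd q _ (Matches.starEps q')
    (fun _ t₂ _ _ ih h2 => reStarAppend ih (h t₂ h2))

theorem rePlusToStar {q : RE α} {s : List α} (h : Matches q.plus s) : Matches q.star s := by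
  cases h with
  | plus h1 h2 => exact reStarAppend h1 (reToStar h2)

theorem reStarToPlus {q : RE α} {s : List α} (h : Matches q.star s) (hne : s ≠ []) :
    Matches q.plus s := by
  rcases reStarInv h with rfl | ⟨s₁, s₂, rfl, _, h1, h2⟩
  · exact absurd rfl hne
  · exact Matches.plus h1 h2

theorem rePlusOf {q : RE α} {s : List α} (h : Matches q s) : Matches q.plus s := by
  simpa using Matches.plus (Matches.starEps q) h

theorem reStarOpt {q : RE α} {s : List α} : Matches q.opt.star s ↔ Matches q.star s := by
  constructor
  · refine reStarFlat (fun t ht => ?_) s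
    cases ht with
    | optEps => exact Matches.starEps q
    | opt h => exact reToStar h
  · exact reStarFlat (fun t ht => reToStar (Matches.opt ht)) s

theorem reStarStar {q : RE α} {s : List α} : Matches q.star.star s ↔ Matches q.star s := by
  constructor
  · exact reStarFlat (fun t ht => ht) s
  · exact reStarFlat (fun t ht => reToStar (reToStar ht)) s

theorem reStarPlus {q : RE α} {s : List α} : Matches q.plus.star s ↔ Matches q.star s := by
  constructor
  · exact reStarFlat (fun t ht => rePlusToStar ht) s
  · exact reStarFlat (fun t ht => reToStar (rePlusOf ht)) s

/-- Smart constructor collapsing `opt` over a unary top. -/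
def normOpt : RE α → RE α
  | .opt r => .opt r
  | .star r => .star r
  | .plus r => .star r
  | r => .opt r

/-- Smart constructor collapsing `star` over a unary top. -/
def normStar : RE α → RE α
  | .opt r => .star r
  | .star r => .star r
  | .plus r => .star r
  | r => .star r

/-- Smart constructor collapsing `plus` over a unary top. -/
def normPlus : RE α → RE α
  | .opt r => .star r
  | .star r => .star r
  | .plus r => .plus r
  | r => .plus r

/-- Normal form: collapse all stacked unary operators. -/
def normRE : RE α → RE α
  | .sym a => .sym a
  | .opt r => normOpt (normRE r)
  | .star r => normStar (normRE r)
  | .plus r => normPlus (normRE r)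
  | .cat r₁ r₂ => .cat (normRE r₁) (normRE r₂)
  | .inter r₁ r₂ => .inter (normRE r₁) (normRE r₂)
  | .alt r₁ r₂ => .alt (normRE r₁) (normRE r₂)

theorem normOpt_correct (q : RE α) (s : List α) :
    Matches (normOpt q) s ↔ Matches q.opt s := by
  cases q with
  | opt r =>
    constructor
    · exact Matches.opt
    · intro h; cases h with
      | optEps => exact Matches.optEps r
      | opt h => exact h
  | star r =>
    constructor
    · exact Matches.opt
    · intro h; cases h with
      | optEps => exact Matches.starEps r
      | opt h => exact h
  | plus r =>
    constructor
    · intro h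
      rcases eq_or_ne s [] with rfl | hne
      · exact Matches.optEps _
      · exact Matches.opt (reStarToPlus h hne)
    · intro h; cases h with
      | optEps => exact Matches.starEps r
      | opt h => exact rePlusToStar h
  | sym a => exact Iff.rfl
  | cat r₁ r₂ => exact Iff.rfl
  | inter r₁ r₂ => exact Iff.rfl
  | alt r₁ r₂ => exact Iff.rfl

theorem normStar_correct (q : RE α) (s : List α) :
    Matches (normStar q) s ↔ Matches q.star s := by
  cases q with
  | opt r => exact reStarOpt.symm
  | star r => exact reStarStar.symm
  | plus r => exact reStarPlus.symm
  | sym a => exact Iff.rfl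
  | cat r₁ r₂ => exact Iff.rfl
  | inter r₁ r₂ => exact Iff.rfl
  | alt r₁ r₂ => exact Iff.rfl

theorem normPlus_correct (q : RE α) (s : List α) :
    Matches (normPlus q) s ↔ Matches q.plus s := by
  cases q with
  | opt r =>
    constructor
    · intro h
      simpa using Matches.plus (reStarOpt.mpr h) (Matches.optEps r)
    · intro h; cases h with
      | plus h1 h2 =>
        have h1' := reStarOpt.mp h1
        cases h2 with
        | optEps => simpa [normPlus] using h1'
        | opt h => exact reStarAppend h1' (reToStar h)
  | star r =>
    constructor
    · intro h
      simpa using Matches.plus (Matches.starEps (RE.star r)) h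
    · intro h; cases h with
      | plus h1 h2 => exact reStarAppend (reStarStar.mp h1) h2
  | plus r =>
    constructor
    · exact rePlusOf
    · intro h; cases h with
      | plus h1 h2 =>
        have h1' := reStarPlus.mp h1
        cases h2 with
        | plus g1 g2 =>
          rw [← List.append_assoc]
          exact Matches.plus (reStarAppend h1' g1) g2
  | sym a => exact Iff.rfl
  | cat r₁ r₂ => exact Iff.rfl
  | inter r₁ r₂ => exact Iff.rfl
  | alt r₁ r₂ => exact Iff.rfl

theorem normRE_correct (r : RE α) : ∀ s, Matches (normRE r) s ↔ Matches r s := by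
  induction r with
  | sym a => exact fun s => Iff.rfl
  | opt r ih =>
    intro s
    rw [show normRE (RE.opt r) = normOpt (normRE r) from rfl, normOpt_correct]
    constructor
    · intro h; cases h with
      | optEps => exact Matches.optEps r
      | opt h => exact Matches.opt ((ih _).mp h)
    · intro h; cases h with
      | optEps => exact Matches.optEps _
      | opt h => exact Matches.opt ((ih _).mpr h)
  | star r ih =>
    intro s
    rw [show normRE (RE.star r) = normStar (normRE r) from rfl, normStar_correct]
    exact ⟨reStarFlat (fun t ht => reToStar ((ih t).mp ht)) s,
      reStarFlat (fun t ht => reToStar ((ih t).mpr ht)) s⟩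
  | plus r ih =>
    intro s
    rw [show normRE (RE.plus r) = normPlus (normRE r) from rfl, normPlus_correct]
    constructor
    · intro h; cases h with
      | plus h1 h2 =>
        exact Matches.plus (reStarFlat (fun t ht => reToStar ((ih t).mp ht)) _ h1)
          ((ih _).mp h2)
    · intro h; cases h with
      | plus h1 h2 =>
        exact Matches.plus (reStarFlat (fun t ht => reToStar ((ih t).mpr ht)) _ h1)
          ((ih _).mpr h2)
  | cat r₁ r₂ ih₁ ih₂ =>
    intro s
    constructor
    · intro h; cases h with
      | cat h1 h2 => exact Matches.cat ((ih₁ _).mp h1) ((ih₂ _).mp h2)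
    · intro h; cases h with
      | cat h1 h2 => exact Matches.cat ((ih₁ _).mpr h1) ((ih₂ _).mpr h2)
  | inter r₁ r₂ ih₁ ih₂ =>
    intro s
    constructor
    · intro h; cases h with
      | inter hsh h1 h2 => exact Matches.inter hsh ((ih₁ _).mp h1) ((ih₂ _).mp h2)
    · intro h; cases h with
      | inter hsh h1 h2 => exact Matches.inter hsh ((ih₁ _).mpr h1) ((ih₂ _).mpr h2)
  | alt r₁ r₂ ih₁ ih₂ =>
    intro s
    constructor
    · intro h; cases h with
      | altLeft h => exact Matches.altLeft ((ih₁ _).mp h)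
      | altRight h => exact Matches.altRight ((ih₂ _).mp h)
    · intro h; cases h with
      | altLeft h => exact Matches.altLeft ((ih₁ _).mpr h)
      | altRight h => exact Matches.altRight ((ih₂ _).mpr h)

theorem normOpt_symList (q : RE α) : (normOpt q).symList = q.symList := by
  cases q <;> rfl

theorem normStar_symList (q : RE α) : (normStar q).symList = q.symList := by
  cases q <;> rfl

theorem normPlus_symList (q : RE α) : (normPlus q).symList = q.symList := by
  cases q <;> rfl

theorem normRE_symList (r : RE α) : (normRE r).symList = r.symList := by
  induction r with
  | sym a => rfl
  | opt r ih => rw [show normRE (RE.opt r) = normOpt (normRE r) from rfl, normOpt_symList]; exact ih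
  | star r ih => rw [show normRE (RE.star r) = normStar (normRE r) from rfl, normStar_symList]; exact ih
  | plus r ih => rw [show normRE (RE.plus r) = normPlus (normRE r) from rfl, normPlus_symList]; exact ih
  | cat r₁ r₂ ih₁ ih₂ =>
    rw [show (normRE (RE.cat r₁ r₂)).symList = (normRE r₁).symList ++ (normRE r₂).symList from rfl, ih₁, ih₂]
    rfl
  | inter r₁ r₂ ih₁ ih₂ =>
    rw [show (normRE (RE.inter r₁ r₂)).symList = (normRE r₁).symList ++ (normRE r₂).symList from rfl, ih₁, ih₂]
    rfl
  | alt r₁ r₂ ih₁ ih₂ =>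
    rw [show (normRE (RE.alt r₁ r₂)).symList = (normRE r₁).symList ++ (normRE r₂).symList from rfl, ih₁, ih₂]
    rfl

/-- Whether the top constructor is a unary operator. -/
def unaryTop : RE α → Bool
  | .opt _ => true
  | .star _ => true
  | .plus _ => true
  | _ => false

theorem normOpt_bound (q : RE α) {m : ℕ}
    (h : q.size + (if unaryTop q then 2 else 3) ≤ m) :
    (normOpt q).size + (if unaryTop (normOpt q) then 2 else 3) ≤ m := by
  cases q <;> simp [normOpt, unaryTop] at h ⊢ <;> omega

theorem normStar_bound (q : RE α) {m : ℕ}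
    (h : q.size + (if unaryTop q then 2 else 3) ≤ m) :
    (normStar q).size + (if unaryTop (normStar q) then 2 else 3) ≤ m := by
  cases q <;> simp [normStar, unaryTop] at h ⊢ <;> omega

theorem normPlus_bound (q : RE α) {m : ℕ}
    (h : q.size + (if unaryTop q then 2 else 3) ≤ m) :
    (normPlus q).size + (if unaryTop (normPlus q) then 2 else 3) ≤ m := by
  cases q <;> simp [normPlus, unaryTop] at h ⊢ <;> omega

theorem normRE_size (r : RE α) :
    (normRE r).size + (if unaryTop (normRE r) then 2 else 3) ≤ 4 * r.symList.length := by
  induction r with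
  | sym a => simp [normRE, unaryTop, RE.symList]
  | opt r ih => exact normOpt_bound _ ih
  | star r ih => exact normStar_bound _ ih
  | plus r ih => exact normPlus_bound _ ih
  | cat r₁ r₂ ih₁ ih₂ =>
    have h1 : (normRE r₁).size + 2 ≤ 4 * r₁.symList.length := by split at ih₁ <;> omega
    have h2 : (normRE r₂).size + 2 ≤ 4 * r₂.symList.length := by split at ih₂ <;> omega
    rw [show normRE (RE.cat r₁ r₂) = RE.cat (normRE r₁) (normRE r₂) from rfl,
      show (RE.cat r₁ r₂).symList = r₁.symList ++ r₂.symList from rfl]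
    simp [unaryTop, List.length_append]
    omega
  | inter r₁ r₂ ih₁ ih₂ =>
    have h1 : (normRE r₁).size + 2 ≤ 4 * r₁.symList.length := by split at ih₁ <;> omega
    have h2 : (normRE r₂).size + 2 ≤ 4 * r₂.symList.length := by split at ih₂ <;> omega
    rw [show normRE (RE.inter r₁ r₂) = RE.inter (normRE r₁) (normRE r₂) from rfl,
      show (RE.inter r₁ r₂).symList = r₁.symList ++ r₂.symList from rfl]
    simp [unaryTop, List.length_append]
    omega
  | alt r₁ r₂ ih₁ ih₂ =>
    have h1 : (normRE r₁).size + 2 ≤ 4 * r₁.symList.length := by split at ih₁ <;> omega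
    have h2 : (normRE r₂).size + 2 ≤ 4 * r₂.symList.length := by split at ih₂ <;> omega
    rw [show normRE (RE.alt r₁ r₂) = RE.alt (normRE r₁) (normRE r₂) from rfl,
      show (RE.alt r₁ r₂).symList = r₁.symList ++ r₂.symList from rfl]
    simp [unaryTop, List.length_append]
    omega

end Aux

/-- every SOIRE is equivalent to a SOIRE of size at most `4·|Σ| − 2`. -/
theorem soire_equiv_bounded_size {α : Type} [Fintype α] [DecidableEq α]
    (r : RE α) (hr : SOIRE r) :
    ∃ r' : RE α, SOIRE r' ∧ r'.size ≤ 4 * Fintype.card α - 2 ∧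
      ∀ s : List α, Matches r' s ↔ Matches r s := by
  refine ⟨normRE r, ?_, ?_, normRE_correct r⟩
  · unfold SOIRE
    rw [normRE_symList]
    exact hr
  · have h := normRE_size r
    have hk : r.symList.length ≤ Fintype.card α := hr.length_le_card
    split at h <;> omega
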